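/- For every ε ∈ (0,1), the function g(t) = t^ε · (t−1)^{1−ε} / (t − 1 + ε) is strictly increasing on (1,∞), with g(t) → 0 as t → 1⁺ and g(t) → 1 as t → ∞. Consequently, for every d > 0 there exists a unique t > 1 with g(t) = e^{−d}. (Existence–uniqueness of the root in equation (mu) of Theorem 3.) -/

import Mathlib

open Real Filter

/-- Existence–uniqueness of the root in equation (mu) of Theorem 3:
`g(t) = t^ε·(t−1)^{1−ε}/(t−1+ε)` is strictly increasing on `(1,∞)` with `g(t) → 0` as
`t → 1⁺` and `g(t) → 1` as `t → ∞`; hence for every `d > 0` there is a unique `t > 1`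
with `g(t) = e^{−d}`. -/
theorem stmt_13 (e : ℝ) (he : e ∈ Set.Ioo (0 : ℝ) 1) :
    StrictMonoOn (fun t : ℝ => t ^ e * (t - 1) ^ (1 - e) / (t - 1 + e)) (Set.Ioi 1) ∧
    Tendsto (fun t : ℝ => t ^ e * (t - 1) ^ (1 - e) / (t - 1 + e))
      (nhdsWithin 1 (Set.Ioi 1)) (nhds 0) ∧
    Tendsto (fun t : ℝ => t ^ e * (t - 1) ^ (1 - e) / (t - 1 + e)) atTop (nhds 1) ∧
    ∀ d : ℝ, 0 < d → ∃! t : ℝ, t ∈ Set.Ioi (1 : ℝ) ∧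
      t ^ e * (t - 1) ^ (1 - e) / (t - 1 + e) = Real.exp (-d) := by
  obtain ⟨he0, he1⟩ := he
  set g : ℝ → ℝ := fun t => t ^ e * (t - 1) ^ (1 - e) / (t - 1 + e) with hgdef
  have hgpos : ∀ t ∈ Set.Ioi (1:ℝ), 0 < g t := by
    intro t ht
    have ht1 : (1:ℝ) < t := ht
    have h1 : (0:ℝ) < t := by linarith
    have h2 : (0:ℝ) < t - 1 := by linarith
    have h3 : (0:ℝ) < t - 1 + e := by linarith
    exact div_pos (mul_pos (Real.rpow_pos_of_pos h1 e) (Real.rpow_pos_of_pos h2 (1-e))) h3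
  -- continuity on Ioi 1
  have hcont : ContinuousOn g (Set.Ioi 1) := by
    apply ContinuousOn.div
    · exact (continuousOn_id.rpow_const (fun x _ => Or.inr he0.le)).mul
        ((continuousOn_id.sub continuousOn_const).rpow_const (fun x _ => Or.inr (by linarith)))
    · exact (continuousOn_id.sub continuousOn_const).add continuousOn_const
    · intro x hx
      have hx1 : (1:ℝ) < x := hx
      show x - 1 + e ≠ 0
      exact ne_of_gt (by linarith)
  -- the log of g
  set h : ℝ → ℝ := fun t => e * Real.log t + (1 - e) * Real.log (t - 1) - Real.log (t - 1 + e)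
    with hhdef
  have hlog : ∀ t ∈ Set.Ioi (1:ℝ), Real.log (g t) = h t := by
    intro t ht
    have ht1 : (1:ℝ) < t := ht
    have h1 : (0:ℝ) < t := by linarith
    have h2 : (0:ℝ) < t - 1 := by linarith
    have h3 : (0:ℝ) < t - 1 + e := by linarith
    simp only [hgdef, hhdef]
    rw [Real.log_div (by positivity) (by positivity),
      Real.log_mul (by positivity) (by positivity),
      Real.log_rpow h1, Real.log_rpow h2]
  have hderiv : ∀ t ∈ Set.Ioi (1:ℝ),
      HasDerivAt h (e * (1/t) + (1-e) * (1/(t-1)) - 1/(t-1+e)) t := by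
    intro t ht
    have ht1 : (1:ℝ) < t := ht
    have h1 : (0:ℝ) < t := by linarith
    have h2 : (0:ℝ) < t - 1 := by linarith
    have h3 : (0:ℝ) < t - 1 + e := by linarith
    have d1 : HasDerivAt (fun t : ℝ => Real.log t) (1/t) t := by
      simpa using (hasDerivAt_id t).log h1.ne'
    have d2 : HasDerivAt (fun t : ℝ => Real.log (t - 1)) (1/(t-1)) t := by
      simpa using ((hasDerivAt_id t).sub_const 1).log h2.ne'
    have d3 : HasDerivAt (fun t : ℝ => Real.log (t - 1 + e)) (1/(t-1+e)) t := by
      simpa using (((hasDerivAt_id t).sub_const 1).add_const e).log h3.ne'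
    exact ((d1.const_mul e).add (d2.const_mul (1-e))).sub d3
  have hderiv_pos : ∀ t ∈ Set.Ioi (1:ℝ),
      0 < e * (1/t) + (1-e) * (1/(t-1)) - 1/(t-1+e) := by
    intro t ht
    have ht1 : (1:ℝ) < t := ht
    have h1 : (0:ℝ) < t := by linarith
    have h2 : (0:ℝ) < t - 1 := by linarith
    have h3 : (0:ℝ) < t - 1 + e := by linarith
    have key : e * (1/t) + (1-e) * (1/(t-1)) - 1/(t-1+e)
        = e * (1-e) / (t * (t-1) * (t-1+e)) := by
      field_simp
      ring
    rw [key]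
    exact div_pos (by nlinarith) (by positivity)
  have hmonoh : StrictMonoOn h (Set.Ioi 1) := by
    apply strictMonoOn_of_deriv_pos (convex_Ioi 1)
    · intro x hx
      exact ((hderiv x hx).differentiableAt).continuousAt.continuousWithinAt
    · intro x hx
      rw [interior_Ioi] at hx
      rw [(hderiv x hx).deriv]
      exact hderiv_pos x hx
  have hmono : StrictMonoOn g (Set.Ioi 1) := by
    intro a ha b hb hab
    have := hmonoh ha hb hab
    rw [← hlog a ha, ← hlog b hb] at this
    calc g a = Real.exp (Real.log (g a)) := (Real.exp_log (hgpos a ha)).symm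
    _ < Real.exp (Real.log (g b)) := Real.exp_lt_exp.mpr this
    _ = g b := Real.exp_log (hgpos b hb)
  -- limit at 1+
  have h0 : Tendsto g (nhdsWithin 1 (Set.Ioi 1)) (nhds 0) := by
    have c2 : ContinuousAt (fun t : ℝ => (t - 1) ^ (1-e)) 1 := by
      have hrp : ContinuousAt (fun x : ℝ => x ^ (1-e)) ((1:ℝ) - 1) := by
        rw [show (1:ℝ) - 1 = 0 by norm_num]
        exact Real.continuousAt_rpow_const 0 (1-e) (Or.inr (by linarith))
      exact ContinuousAt.comp (g := fun x : ℝ => x ^ (1-e)) (f := fun t : ℝ => t - 1)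
        hrp (continuousAt_id.sub continuousAt_const)
    have hc : ContinuousAt g 1 := by
      apply ContinuousAt.div
      · exact (Real.continuousAt_rpow_const 1 e (Or.inl one_ne_zero)).mul c2
      · exact (continuousAt_id.sub continuousAt_const).add continuousAt_const
      · norm_num
        exact ne_of_gt he0
    have hval : g 1 = 0 := by
      simp only [hgdef]
      rw [sub_self, Real.zero_rpow (by linarith)]
      ring
    have := hc.tendsto
    rw [hval] at this
    exact this.mono_left nhdsWithin_le_nhds
  -- limit at infinity
  have h1 : Tendsto g atTop (nhds 1) := by
    have heq : ∀ᶠ t : ℝ in atTop, g t = (t/(t-1+e))^e * ((t-1)/(t-1+e))^(1-e) := by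
      filter_upwards [eventually_gt_atTop (1:ℝ)] with t ht
      have ha : (0:ℝ) < t := by linarith
      have hb : (0:ℝ) < t - 1 := by linarith
      have hc : (0:ℝ) < t - 1 + e := by linarith
      rw [Real.div_rpow ha.le hc.le, Real.div_rpow hb.le hc.le, div_mul_div_comm,
        ← Real.rpow_add hc, show e + (1-e) = 1 by ring, Real.rpow_one]
    have hd : Tendsto (fun t : ℝ => t/(t-1+e)) atTop (nhds 1) := by
      have : ∀ᶠ t : ℝ in atTop, t/(t-1+e) = 1 - (e-1)/(t-1+e) := by
        filter_upwards [eventually_gt_atTop (1:ℝ)] with t ht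
        have hc : (0:ℝ) < t - 1 + e := by linarith
        field_simp
        ring
      rw [tendsto_congr' this]
      have hz : Tendsto (fun t : ℝ => (e-1)/(t-1+e)) atTop (nhds 0) := by
        apply Tendsto.div_atTop tendsto_const_nhds
        exact tendsto_atTop_add_const_right _ _ (tendsto_atTop_add_const_right _ _ tendsto_id)
      simpa using tendsto_const_nhds.sub hz
    have hd2 : Tendsto (fun t : ℝ => (t-1)/(t-1+e)) atTop (nhds 1) := by
      have : ∀ᶠ t : ℝ in atTop, (t-1)/(t-1+e) = 1 - e/(t-1+e) := by
        filter_upwards [eventually_gt_atTop (1:ℝ)] with t ht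
        have hc : (0:ℝ) < t - 1 + e := by linarith
        field_simp
        ring
      rw [tendsto_congr' this]
      have hz : Tendsto (fun t : ℝ => e/(t-1+e)) atTop (nhds 0) := by
        apply Tendsto.div_atTop tendsto_const_nhds
        exact tendsto_atTop_add_const_right _ _ (tendsto_atTop_add_const_right _ _ tendsto_id)
      simpa using tendsto_const_nhds.sub hz
    have hf1 : Tendsto (fun t : ℝ => (t/(t-1+e))^e) atTop (nhds 1) := by
      have := (Real.continuousAt_rpow_const 1 e (Or.inl one_ne_zero)).tendsto.comp hd
      simpa [Function.comp_def, Real.one_rpow] using this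
    have hf2 : Tendsto (fun t : ℝ => ((t-1)/(t-1+e))^(1-e)) atTop (nhds 1) := by
      have := (Real.continuousAt_rpow_const 1 (1-e) (Or.inl one_ne_zero)).tendsto.comp hd2
      simpa [Function.comp_def, Real.one_rpow] using this
    rw [tendsto_congr' heq]
    simpa using hf1.mul hf2
  refine ⟨hmono, h0, h1, ?_⟩
  intro d hd
  have hexp0 : 0 < Real.exp (-d) := Real.exp_pos _
  have hexp1 : Real.exp (-d) < 1 := Real.exp_lt_one_iff.mpr (by linarith)
  -- find a with g a < exp(-d)
  obtain ⟨a, ha1, halt⟩ : ∃ a : ℝ, 1 < a ∧ g a < Real.exp (-d) := by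
    have hev := h0.eventually_lt_const hexp0
    have hmem : ∀ᶠ t : ℝ in nhdsWithin 1 (Set.Ioi 1), t ∈ Set.Ioi (1:ℝ) :=
      self_mem_nhdsWithin
    obtain ⟨a, h1a, h2a⟩ := (hmem.and hev).exists
    exact ⟨a, h1a, h2a⟩
  obtain ⟨b, hb1, hblt⟩ : ∃ b : ℝ, a ≤ b ∧ Real.exp (-d) < g b := by
    have hev := h1.eventually_const_lt hexp1
    obtain ⟨b, h1b, h2b⟩ := ((eventually_ge_atTop a).and hev).exists
    exact ⟨b, h1b, h2b⟩
  have hsub : Set.Icc a b ⊆ Set.Ioi 1 := fun x hx => lt_of_lt_of_le ha1 hx.1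
  have hivt := intermediate_value_Icc hb1 (hcont.mono hsub)
  have hmemIcc : Real.exp (-d) ∈ Set.Icc (g a) (g b) := ⟨halt.le, hblt.le⟩
  obtain ⟨t, htIcc, hteq⟩ := hivt hmemIcc
  refine ⟨t, ⟨hsub htIcc, hteq⟩, ?_⟩
  rintro y ⟨hy, hy2⟩
  have hgy : g y = Real.exp (-d) := hy2
  exact hmono.injOn hy (hsub htIcc) (hgy.trans hteq.symm)
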